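/- Let q be a prime power and let b, n be positive integers with b ≤ n. For every c ∈ F_q^n, (q - 1)·q^{b-1}·wt_b(c) = Σ_{(a_0, …, a_{b-1}) ∈ F_q^b} wt_H(a_0·c^0 + a_1·c^1 + ⋯ + a_{b-1}·c^{b-1}), where c^j denotes the j-th cyclic shift of c. -/
import Mathlib

open Finset

lemma key_count (q b : ℕ) (F : Type*) [Field F] [Fintype F] [DecidableEq F]
    (hF : Fintype.card F = q) (d : Fin b → F) (hd : d ≠ 0) :
    (Finset.univ.filter (fun a : Fin b → F => ∑ j, a j * d j ≠ 0)).card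
      = (q - 1) * q ^ (b - 1) := by
  classical
  obtain ⟨j0, hj0⟩ : ∃ j, d j ≠ 0 := by
    by_contra h; push_neg at h; exact hd (funext h)
  have hb : 0 < b := j0.pos
  set φ : (Fin b → F) →ₗ[F] F :=
    { toFun := fun a => ∑ j, a j * d j
      map_add' := by intro x y; simp [add_mul, Finset.sum_add_distrib]
      map_smul' := by intro r x; simp [Finset.mul_sum, mul_assoc] } with hφ
  have hsurj : Function.Surjective φ := by
    intro r
    refine ⟨Pi.single j0 (r / d j0), ?_⟩
    simp only [hφ, LinearMap.coe_mk, AddHom.coe_mk]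
    rw [Finset.sum_eq_single j0]
    · simp [div_mul_cancel₀, hj0]
    · intro j _ hj; simp [Pi.single_eq_of_ne hj]
    · simp
  have hker : Module.finrank F (LinearMap.ker φ) = b - 1 := by
    have h1 := LinearMap.finrank_range_add_finrank_ker φ
    rw [LinearMap.range_eq_top.mpr hsurj, finrank_top, Module.finrank_self,
      Module.finrank_fin_fun] at h1
    omega
  have hkcard : Fintype.card (LinearMap.ker φ) = q ^ (b - 1) := by
    rw [Module.card_eq_pow_finrank (K := F), hF, hker]
  have hzero : (Finset.univ.filter (fun a : Fin b → F => ∑ j, a j * d j = 0)).card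
      = q ^ (b - 1) := by
    rw [← hkcard, ← Fintype.card_subtype]
    apply Fintype.card_congr
    exact Equiv.subtypeEquivRight (fun a => by simp [φ, LinearMap.mem_ker])
  clear_value φ
  clear hφ hsurj hker hkcard φ hj0 j0 hd
  have htot := Finset.card_filter_add_card_filter_not
    (s := (Finset.univ : Finset (Fin b → F))) (p := fun a => ∑ j, a j * d j = 0)
  beta_reduce at htot
  rw [Finset.card_univ] at htot
  have hcard : Fintype.card (Fin b → F) = q ^ b := by simp [hF]
  rw [hcard] at htot
  simp only [ne_eq]
  have hq : 1 ≤ q := hF ▸ Fintype.card_pos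
  have hqq : q ^ b = q * q ^ (b - 1) := by
    conv_lhs => rw [(Nat.sub_add_cancel hb).symm]
    rw [pow_succ']
  rw [Nat.sub_mul, one_mul]
  generalize (Finset.univ.filter (fun a : Fin b → F => ¬ ∑ j, a j * d j = 0)).card = x at htot ⊢
  generalize hy : q ^ (b - 1) = y at hzero hqq
  rw [hzero, hqq] at htot
  clear hzero
  omega

/-- The `b`-symbol weight of a vector `c ∈ F^n` (coordinates indexed cyclically by `ZMod n`). -/
noncomputable def bWt {n : ℕ} {F : Type*} [Zero F] (b : ℕ) (c : ZMod n → F) : ℕ :=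
  Nat.card {i : ZMod n | ∃ j < b, c (i + (j : ZMod n)) ≠ 0}

/-- The Hamming weight of a vector: its number of nonzero coordinates. -/
noncomputable def hWt {ι : Type*} {F : Type*} [Zero F] (u : ι → F) : ℕ :=
  Nat.card {i : ι | u i ≠ 0}

/-- `(q-1)·q^{b-1}·wt_b(c) = Σ_{(a_0,…,a_{b-1}) ∈ F_q^b} wt_H(a_0 c^0 + ⋯ + a_{b-1} c^{b-1})`,
where `c^j` is the `j`-th cyclic shift of `c`, i.e. `c^j(i) = c(i+j)`. -/
theorem stmt5 (q b n : ℕ) (hb : 0 < b) (hbn : b ≤ n)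
    (F : Type*) [Field F] [Fintype F] (hF : Fintype.card F = q)
    (c : ZMod n → F) :
    (q - 1) * q ^ (b - 1) * bWt b c
      = ∑ a : Fin b → F,
          hWt (fun i : ZMod n => ∑ j : Fin b, a j * c (i + ((j : ℕ) : ZMod n))) := by
  classical
  haveI : NeZero n := ⟨by omega⟩
  have h1 : ∀ a : Fin b → F,
      hWt (fun i : ZMod n => ∑ j : Fin b, a j * c (i + ((j : ℕ) : ZMod n)))
        = (Finset.univ.filter
            (fun i : ZMod n => ∑ j : Fin b, a j * c (i + ((j:ℕ) : ZMod n)) ≠ 0)).card := by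
    intro a
    rw [hWt, Nat.card_eq_fintype_card]
    simp [Fintype.card_subtype]
  have h2 : bWt b c = (Finset.univ.filter
      (fun i : ZMod n => ∃ j < b, c (i + (j : ZMod n)) ≠ 0)).card := by
    rw [bWt, Nat.card_eq_fintype_card]
    simp [Fintype.card_subtype]
  have key : ∀ i : ZMod n,
      (Finset.univ.filter
        (fun a : Fin b → F => ∑ j : Fin b, a j * c (i + ((j:ℕ):ZMod n)) ≠ 0)).card
        = if (∃ j < b, c (i + (j : ZMod n)) ≠ 0) then (q-1)*q^(b-1) else 0 := by
    intro i
    by_cases h : (∃ j < b, c (i + (j : ZMod n)) ≠ 0)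
    · rw [if_pos h]
      refine key_count q b F hF (fun j => c (i + ((j:ℕ):ZMod n))) ?_
      intro hzero
      obtain ⟨j, hj, hc⟩ := h
      exact hc (congrFun hzero ⟨j, hj⟩)
    · rw [if_neg h]
      push_neg at h
      rw [Finset.card_eq_zero, Finset.filter_eq_empty_iff]
      intro a _
      simp only [ne_eq, not_not]
      apply Finset.sum_eq_zero
      intro j _
      rw [h j j.isLt, mul_zero]
  rw [h2]
  calc (q - 1) * q ^ (b - 1)
        * (Finset.univ.filter (fun i : ZMod n => ∃ j < b, c (i + (j : ZMod n)) ≠ 0)).card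
      = ∑ _i ∈ Finset.univ.filter (fun i : ZMod n => ∃ j < b, c (i + (j : ZMod n)) ≠ 0),
          (q - 1) * q ^ (b - 1) := by rw [Finset.sum_const, smul_eq_mul, mul_comm]
    _ = ∑ i : ZMod n, if (∃ j < b, c (i + (j : ZMod n)) ≠ 0) then (q-1)*q^(b-1) else 0 := by
          rw [Finset.sum_filter]
    _ = ∑ i : ZMod n, (Finset.univ.filter
          (fun a : Fin b → F => ∑ j : Fin b, a j * c (i + ((j:ℕ):ZMod n)) ≠ 0)).card := by
          exact Finset.sum_congr rfl (fun i _ => (key i).symm)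
    _ = ∑ i : ZMod n, ∑ a : Fin b → F,
          (if ∑ j : Fin b, a j * c (i + ((j:ℕ):ZMod n)) ≠ 0 then 1 else 0) := by
          exact Finset.sum_congr rfl (fun i _ => Finset.card_filter _ _)
    _ = ∑ a : Fin b → F, ∑ i : ZMod n,
          (if ∑ j : Fin b, a j * c (i + ((j:ℕ):ZMod n)) ≠ 0 then 1 else 0) := Finset.sum_comm
    _ = ∑ a : Fin b → F, (Finset.univ.filter
          (fun i : ZMod n => ∑ j : Fin b, a j * c (i + ((j:ℕ):ZMod n)) ≠ 0)).card := by
          exact Finset.sum_congr rfl (fun a _ => (Finset.card_filter _ _).symm)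
    _ = ∑ a : Fin b → F,
          hWt (fun i : ZMod n => ∑ j : Fin b, a j * c (i + ((j : ℕ) : ZMod n))) := by
          exact Finset.sum_congr rfl (fun a _ => (h1 a).symm)
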